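/- Let T_B : A → Set B and T_C : A → Set C be uncertain channels over finite alphabets, and define C₀(T_B, T_C) = sup_{n≥1} (log N(n))/n, where N(n) is the maximal M ≥ 1 such that a zero-error wiretap (n,M)-code for (T_B,T_C) exists (with N(n)=1 if none exists with M ≥ 2). Suppose that (i) the product of a zero-error wiretap code with a zero-error code for T_B is a zero-error wiretap code, and (ii) C₀(T_B,T_C) > 0, i.e., some zero-error wiretap (n₁,M₁)-code with M₁ ≥ 2 exists. Then C₀(T_B,T_C) = C₀(T_B), where C₀(T_B) = sup_n (log N_{T_B}(n))/n with N_{T_B}(n) the maximal size of a zero-error (n,·)-code for T_B. -/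

import Mathlib

/-- The `n`-fold product of an uncertain channel. -/
def chanPow {A B : Type*} (T : A → Set B) (n : ℕ) :
    (Fin n → A) → Set (Fin n → B) :=
  fun a => {b | ∀ i, b i ∈ T (a i)}

/-- A zero-error `(n,M)`-code for `T` exists. -/
def HasZE {A B : Type*} (T : A → Set B) (n M : ℕ) : Prop :=
  ∃ F : Fin M → Set (Fin n → A),
    (∀ m, (F m).Nonempty) ∧
    (∀ m m', m ≠ m' → F m ∩ F m' = ∅) ∧
    (∀ m m', m ≠ m' →
      (⋃ a ∈ F m, chanPow T n a) ∩ (⋃ a ∈ F m', chanPow T n a) = ∅)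

/-- A zero-error wiretap `(n,M)`-code for `(T_B,T_C)` exists. -/
def HasWT {A B C : Type*} (TB : A → Set B) (TC : A → Set C) (n M : ℕ) : Prop :=
  ∃ F : Fin M → Set (Fin n → A),
    (∀ m, (F m).Nonempty) ∧
    (∀ m m', m ≠ m' → F m ∩ F m' = ∅) ∧
    (∀ m m', m ≠ m' →
      (⋃ a ∈ F m, chanPow TB n a) ∩ (⋃ a ∈ F m', chanPow TB n a) = ∅) ∧
    (∀ c : Fin n → C, (∃ m, ∃ a ∈ F m, c ∈ chanPow TC n a) →
      ∃ m m', m ≠ m' ∧ (∃ a ∈ F m, c ∈ chanPow TC n a) ∧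
        (∃ a ∈ F m', c ∈ chanPow TC n a))

/-- The maximal size of a zero-error code of blocklength `n`. -/
noncomputable def NZE {A B : Type*} (T : A → Set B) (n : ℕ) : ℕ :=
  sSup {M | M = 1 ∨ HasZE T n M}

/-- The maximal size of a zero-error wiretap code of blocklength `n`. -/
noncomputable def NWT {A B C : Type*} (TB : A → Set B) (TC : A → Set C)
    (n : ℕ) : ℕ :=
  sSup {M | M = 1 ∨ HasWT TB TC n M}

lemma wt_to_ze' {A B C : Type*} {TB : A → Set B} {TC : A → Set C} {n M : ℕ}
    (h : HasWT TB TC n M) : HasZE TB n M := by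
  obtain ⟨F, h1, h2, h3, -⟩ := h
  exact ⟨F, h1, h2, h3⟩

lemma ze_bound' {A B : Type*} [Fintype B] {TB : A → Set B}
    (hTB : ∀ a, (TB a).Nonempty) {n M : ℕ}
    (h : HasZE TB n M) : M ≤ Fintype.card B ^ n := by
  classical
  obtain ⟨F, hne, -, hout⟩ := h
  choose a ha using hne
  have hb : ∀ m, ∃ b : Fin n → B, b ∈ chanPow TB n (a m) :=
    fun m => ⟨fun i => (hTB ((a m) i)).choose, fun i => (hTB _).choose_spec⟩
  choose b hbmem using hb
  have hinj : Function.Injective b := by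
    intro m m' he
    by_contra hne'
    have hmem : b m ∈ (⋃ x ∈ F m, chanPow TB n x) ∩ (⋃ x ∈ F m', chanPow TB n x) := by
      refine ⟨Set.mem_biUnion (ha m) (hbmem m), ?_⟩
      rw [he]
      exact Set.mem_biUnion (ha m') (hbmem m')
    rw [hout m m' hne'] at hmem
    exact hmem
  calc M = Fintype.card (Fin M) := (Fintype.card_fin M).symm
    _ ≤ Fintype.card (Fin n → B) := Fintype.card_le_of_injective b hinj
    _ = Fintype.card B ^ n := by simp [Fintype.card_fun]

theorem stmt_9 {A B C : Type*} [Fintype A] [Fintype B] [Fintype C]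
    (TB : A → Set B) (TC : A → Set C)
    (hTB : ∀ a, (TB a).Nonempty) (hTC : ∀ a, (TC a).Nonempty)
    -- (i) products of wiretap codes with zero-error codes are wiretap codes
    (hprod : ∀ n₁ M₁ n₂ M₂, 1 ≤ n₁ → 1 ≤ n₂ →
      HasWT TB TC n₁ M₁ → HasZE TB n₂ M₂ → HasWT TB TC (n₁ + n₂) (M₁ * M₂))
    -- (ii) positive zero-error secrecy capacity: some secure code exists
    (hpos : ∃ n₁ M₁, 1 ≤ n₁ ∧ 2 ≤ M₁ ∧ HasWT TB TC n₁ M₁) :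
    (⨆ n : ℕ, Real.log (NWT TB TC (n + 1)) / (n + 1))
      = (⨆ n : ℕ, Real.log (NZE TB (n + 1)) / (n + 1)) := by
  classical
  obtain ⟨n₁, M₁, hn₁, hM₁, hWTc⟩ := hpos
  have hA : Nonempty A := by
    obtain ⟨F, hne, -, -, -⟩ := hWTc
    obtain ⟨f, -⟩ := hne ⟨0, by omega⟩
    exact ⟨f ⟨0, hn₁⟩⟩
  have hB : Nonempty B := ⟨(hTB hA.some).choose⟩
  have hcB : 1 ≤ Fintype.card B := Fintype.card_pos
  have hbddZE : ∀ n, BddAbove {M | M = 1 ∨ HasZE TB n M} := by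
    intro n
    refine ⟨Fintype.card B ^ n, fun M hM => ?_⟩
    rcases hM with rfl | hM
    · exact Nat.one_le_pow _ _ hcB
    · exact ze_bound' hTB hM
  have hbddWT : ∀ n, BddAbove {M | M = 1 ∨ HasWT TB TC n M} := by
    intro n
    refine ⟨Fintype.card B ^ n, fun M hM => ?_⟩
    rcases hM with rfl | hM
    · exact Nat.one_le_pow _ _ hcB
    · exact ze_bound' hTB (wt_to_ze' hM)
  have hZE1 : ∀ n, 1 ≤ NZE TB n := fun n => le_csSup (hbddZE n) (Or.inl rfl)
  have hWT1 : ∀ n, 1 ≤ NWT TB TC n := fun n => le_csSup (hbddWT n) (Or.inl rfl)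
  have hZEub : ∀ n, NZE TB n ≤ Fintype.card B ^ n := by
    intro n
    refine csSup_le ⟨1, Or.inl rfl⟩ (fun M hM => ?_)
    rcases hM with rfl | hM
    · exact Nat.one_le_pow _ _ hcB
    · exact ze_bound' hTB hM
  have hWTle : ∀ n, NWT TB TC n ≤ NZE TB n := by
    intro n
    refine csSup_le_csSup (hbddZE n) ⟨1, Or.inl rfl⟩ (fun M hM => ?_)
    exact hM.imp id wt_to_ze'
  have hRub : ∀ n : ℕ, Real.log (NZE TB (n+1)) / ((n:ℝ)+1) ≤ Real.log (Fintype.card B) := by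
    intro n
    rw [div_le_iff₀ (by positivity)]
    calc Real.log (NZE TB (n+1))
        ≤ Real.log (((Fintype.card B : ℝ)) ^ (n+1)) := by
          apply Real.log_le_log (by exact_mod_cast hZE1 (n+1))
          exact_mod_cast hZEub (n+1)
      _ = ((n:ℝ)+1) * Real.log (Fintype.card B) := by
          rw [Real.log_pow]; push_cast; ring
      _ = Real.log (Fintype.card B) * ((n:ℝ)+1) := by ring
  have hLub : ∀ n : ℕ, Real.log (NWT TB TC (n+1)) / ((n:ℝ)+1) ≤ Real.log (Fintype.card B) := by
    intro n
    refine le_trans ?_ (hRub n)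
    refine (div_le_div_iff_of_pos_right (by positivity)).2 ?_
    apply Real.log_le_log (by exact_mod_cast hWT1 (n+1))
    exact_mod_cast hWTle (n+1)
  have hbddR : BddAbove (Set.range fun n : ℕ => Real.log (NZE TB (n+1)) / ((n:ℝ)+1)) :=
    ⟨Real.log (Fintype.card B), by rintro x ⟨n, rfl⟩; exact hRub n⟩
  have hbddL : BddAbove (Set.range fun n : ℕ => Real.log (NWT TB TC (n+1)) / ((n:ℝ)+1)) :=
    ⟨Real.log (Fintype.card B), by rintro x ⟨n, rfl⟩; exact hLub n⟩
  apply le_antisymm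
  · refine ciSup_le (fun n => ?_)
    refine le_trans ?_ (le_ciSup hbddR n)
    refine (div_le_div_iff_of_pos_right (by positivity)).2 ?_
    apply Real.log_le_log (by exact_mod_cast hWT1 (n+1))
    exact_mod_cast hWTle (n+1)
  · refine ciSup_le (fun m => ?_)
    set M := NZE TB (m+1) with hMdef
    have hmem : M = 1 ∨ HasZE TB (m+1) M := Nat.sSup_mem ⟨1, Or.inl rfl⟩ (hbddZE (m+1))
    have hL0 : (0:ℝ) ≤ ⨆ n : ℕ, Real.log (NWT TB TC (n+1)) / ((n:ℝ)+1) := by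
      refine le_trans ?_ (le_ciSup hbddL 0)
      have : (0:ℝ) ≤ Real.log (NWT TB TC 1) :=
        Real.log_nonneg (by exact_mod_cast hWT1 1)
      positivity
    rcases hmem with h1 | hZE
    · rw [h1]
      simpa using hL0
    · obtain ⟨p, rfl⟩ : ∃ p, n₁ = p + 1 := ⟨n₁ - 1, by omega⟩
      have hiter : ∀ k, HasWT TB TC (p + 1 + k*(m+1)) (M₁ * M^k) := by
        intro k
        induction k with
        | zero => simpa using hWTc
        | succ k ih =>
            have h2 := hprod (p + 1 + k*(m+1)) (M₁ * M^k) (m+1) M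
              (by omega) (by omega) ih hZE
            have e1 : p + 1 + k*(m+1) + (m+1) = p + 1 + (k+1)*(m+1) := by ring
            have e2 : M₁ * M^k * M = M₁ * M^(k+1) := by ring
            rwa [e1, e2] at h2
      have hNWT : ∀ k, (M₁ * M^k : ℕ) ≤ NWT TB TC (p + 1 + k*(m+1)) :=
        fun k => le_csSup (hbddWT _) (Or.inr (hiter k))
      have hM1 : (1:ℝ) ≤ (M:ℝ) := by exact_mod_cast hZE1 (m+1)
      have hseq : ∀ k : ℕ, 1 ≤ k →
          Real.log M / (((p:ℝ)+1)/(k:ℝ) + ((m:ℝ)+1))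
            ≤ ⨆ n : ℕ, Real.log (NWT TB TC (n+1)) / ((n:ℝ)+1) := by
        intro k hk
        have hk0 : (k:ℝ) ≠ 0 := by positivity
        have hkpos : (0:ℝ) < (k:ℝ) := by positivity
        have hden : (0:ℝ) < ((p:ℝ)+1) + (k:ℝ)*((m:ℝ)+1) := by positivity
        have e1 : ((p:ℝ)+1)/(k:ℝ) + ((m:ℝ)+1)
            = (((p:ℝ)+1) + (k:ℝ)*((m:ℝ)+1)) / (k:ℝ) := by
          field_simp
        have e2 : Real.log M / (((p:ℝ)+1)/(k:ℝ) + ((m:ℝ)+1))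
            = ((k:ℝ) * Real.log M) / (((p:ℝ)+1) + (k:ℝ)*((m:ℝ)+1)) := by
          rw [e1, div_div_eq_mul_div, mul_comm]
        rw [e2]
        refine le_trans ?_ (le_ciSup hbddL (p + k*(m+1)))
        have ecast : ((↑(p + k*(m+1)) : ℝ) + 1) = ((p:ℝ)+1) + (k:ℝ)*((m:ℝ)+1) := by
          push_cast; ring
        rw [ecast]
        refine (div_le_div_iff_of_pos_right hden).2 ?_
        have hlog : (k:ℝ) * Real.log M ≤ Real.log ((M₁ : ℝ) * (M:ℝ)^k) := by
          rw [Real.log_mul (Nat.cast_ne_zero.2 (by omega)) (by positivity), Real.log_pow]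
          have h0 : (0:ℝ) ≤ Real.log M₁ :=
            Real.log_nonneg (by exact_mod_cast (by omega : 1 ≤ M₁))
          push_cast
          linarith
        refine hlog.trans ?_
        apply Real.log_le_log (by positivity)
        have h3 := hNWT k
        have e3 : p + k*(m+1) + 1 = p + 1 + k*(m+1) := by ring
        rw [e3]
        exact_mod_cast h3
      have hlim : Filter.Tendsto
          (fun k : ℕ => Real.log M / (((p:ℝ)+1)/(k:ℝ) + ((m:ℝ)+1)))
          Filter.atTop (nhds (Real.log M / (0 + ((m:ℝ)+1)))) := by
        apply Filter.Tendsto.div tendsto_const_nhds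
        · exact (tendsto_const_div_atTop_nhds_zero_nat _).add tendsto_const_nhds
        · positivity
      have hfin := le_of_tendsto hlim (Filter.eventually_atTop.2 ⟨1, hseq⟩)
      rw [zero_add] at hfin
      exact hfin
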